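/- arXiv:2305.17583 — 2 statements merged into one kernel-verified Lean document; each statement's English description precedes it below -/
import Mathlib

section
/- In the setting of the previous construction but with L copies of each parent and scaled weights θ_i/L: summing out all N·L binary parents yields unnormalized potential ∏_{i=1}^N (e^{p_i} e^{θ_i/L} + 1)^L on H=1 and ∏_{i=1}^N (e^{p_i}+1)^L on H=0; hence P(H=1) = [∏_i (e^{p_i}e^{θ_i/L}+1)^L] / [∏_i (e^{p_i}e^{θ_i/L}+1)^L + ∏_i (e^{p_i}+1)^L], and as L → ∞ this converges to σ(∑_{i=1}^N σ(p_i) θ_i). -/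
open Real Finset Filter

noncomputable def sigmoid (x : ℝ) : ℝ := Real.exp x / (Real.exp x + 1)

/-- Unnormalized joint potential of the star-shaped Markov network with `L`
copies of each of the `N` parents: copy `h i k` has unary potential
`e^{p i}` when true, and pairwise potential `e^{θ i / L}` with `H` when
both are true. -/
noncomputable def starPotentialL {N L : ℕ} (p θ : Fin N → ℝ)
    (h : Fin N → Fin L → Bool) (H : Bool) : ℝ :=
  ∏ i : Fin N, ∏ k : Fin L,
    (if h i k then Real.exp (p i) else 1) *
      (if h i k ∧ H then Real.exp (θ i / L) else 1)

lemma sum_prod_bool_aux {N L : ℕ} (f : Fin N → Bool → ℝ) :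
    ∑ h : Fin N → Fin L → Bool, ∏ i : Fin N, ∏ k : Fin L, f i (h i k) =
      ∏ i : Fin N, (∑ b : Bool, f i b) ^ L := by
  have h1 : ∀ i : Fin N, (∑ b : Bool, f i b) ^ L =
      ∑ g : Fin L → Bool, ∏ k : Fin L, f i (g k) := by
    intro i
    have := Finset.prod_univ_sum (fun _ : Fin L => (Finset.univ : Finset Bool))
      (fun _ b => f i b)
    rw [Fintype.piFinset_univ] at this
    rw [← this, Finset.prod_const, Finset.card_univ, Fintype.card_fin]
  simp_rw [h1]
  have := Finset.prod_univ_sum (fun _ : Fin N => (Finset.univ : Finset (Fin L → Bool)))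
    (fun i g => ∏ k : Fin L, f i (g k))
  rw [Fintype.piFinset_univ] at this
  rw [this]

lemma key_slope (p θ : ℝ) :
    Tendsto (fun L : ℕ =>
        (L : ℝ) * (Real.log (Real.exp p * Real.exp (θ / L) + 1) -
          Real.log (Real.exp p + 1)))
      atTop (nhds (_root_.sigmoid p * θ)) := by
  set g : ℝ → ℝ := fun t => Real.log (Real.exp p * Real.exp (t * θ) + 1) with hg
  have hpos : ∀ t : ℝ, 0 < Real.exp p * Real.exp (t * θ) + 1 := fun t => by positivity
  have hd : HasDerivAt g (_root_.sigmoid p * θ) 0 := by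
    have h1 : HasDerivAt (fun t : ℝ => t * θ) θ 0 := hasDerivAt_mul_const θ
    have h2 : HasDerivAt (fun t : ℝ => Real.exp p * Real.exp (t * θ) + 1)
        (Real.exp p * (Real.exp ((0 : ℝ) * θ) * θ)) 0 :=
      ((h1.exp.const_mul (Real.exp p)).add_const 1)
    have h3 := h2.log (ne_of_gt (hpos 0))
    convert h3 using 1
    simp only [zero_mul, Real.exp_zero, mul_one, _root_.sigmoid]
    ring
  have hslope := hasDerivAt_iff_tendsto_slope.mp hd
  have hto : Tendsto (fun L : ℕ => (1 : ℝ) / L) atTop (nhdsWithin 0 {(0:ℝ)}ᶜ) := by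
    apply tendsto_nhdsWithin_of_tendsto_nhds_of_eventually_within _
      tendsto_one_div_atTop_nhds_zero_nat
    filter_upwards [eventually_ge_atTop 1] with L hL
    have hL0 : (0:ℝ) < L := by exact_mod_cast hL
    have h0 : (1:ℝ)/L ≠ 0 := by positivity
    simpa using h0
  have hcomp := hslope.comp hto
  apply hcomp.congr'
  filter_upwards [eventually_ge_atTop 1] with L hL
  have hL0 : (0:ℝ) < L := by exact_mod_cast hL
  have hLne : (L : ℝ) ≠ 0 := ne_of_gt hL0
  simp only [Function.comp_apply, slope_def_field, hg]
  have h1 : (1 : ℝ) / L * θ = θ / L := by field_simp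
  rw [h1]
  rw [zero_mul, Real.exp_zero, mul_one, sub_zero]
  rw [div_eq_mul_inv, one_div, inv_inv, mul_comm]

lemma exp_form {N : ℕ} (L : ℕ) (a : Fin N → ℝ) (ha : ∀ i, 0 < a i) :
    ∏ i : Fin N, a i ^ L = Real.exp (∑ i : Fin N, (L : ℝ) * Real.log (a i)) := by
  rw [Real.exp_sum]
  refine Finset.prod_congr rfl fun i _ => ?_
  rw [Real.exp_nat_mul, Real.exp_log (ha i)]

lemma sigmoid_sub (u v : ℝ) :
    _root_.sigmoid (u - v) = Real.exp u / (Real.exp u + Real.exp v) := by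
  unfold _root_.sigmoid
  rw [Real.exp_sub]
  have h1 := Real.exp_ne_zero v
  have h2 : Real.exp u + Real.exp v ≠ 0 := by positivity
  field_simp

theorem stmt_12 (N : ℕ) (p θ : Fin N → ℝ) :
    (∀ L : ℕ, 0 < L →
      (∑ h : Fin N → Fin L → Bool, starPotentialL p θ h true =
          ∏ i : Fin N, (Real.exp (p i) * Real.exp (θ i / L) + 1) ^ L) ∧
      (∑ h : Fin N → Fin L → Bool, starPotentialL p θ h false =
          ∏ i : Fin N, (Real.exp (p i) + 1) ^ L)) ∧
    Tendsto (fun L : ℕ =>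
        (∏ i : Fin N, (Real.exp (p i) * Real.exp (θ i / L) + 1) ^ L) /
          ((∏ i : Fin N, (Real.exp (p i) * Real.exp (θ i / L) + 1) ^ L) +
            ∏ i : Fin N, (Real.exp (p i) + 1) ^ L))
      atTop (nhds (_root_.sigmoid (∑ i : Fin N, _root_.sigmoid (p i) * θ i))) := by
  constructor
  · intro L _
    constructor
    · have := sum_prod_bool_aux (L := L) (fun i b =>
        (if b = true then Real.exp (p i) else 1) *
          (if b = true ∧ True then Real.exp (θ i / L) else 1))
      simp only [starPotentialL]
      rw [this]
      refine Finset.prod_congr rfl fun i _ => ?_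
      congr 1
      simp [Fintype.sum_bool]
    · have := sum_prod_bool_aux (L := L) (fun i b =>
        (if b = true then Real.exp (p i) else 1) *
          (if b = true ∧ false = true then Real.exp (θ i / L) else 1))
      simp only [starPotentialL]
      rw [this]
      refine Finset.prod_congr rfl fun i _ => ?_
      congr 1
      simp [Fintype.sum_bool]
  · set S : ℕ → ℝ := fun L => ∑ i : Fin N,
      (L : ℝ) * (Real.log (Real.exp (p i) * Real.exp (θ i / L) + 1) -
        Real.log (Real.exp (p i) + 1)) with hS
    have hratio : ∀ L : ℕ,
        (∏ i : Fin N, (Real.exp (p i) * Real.exp (θ i / L) + 1) ^ L) /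
          ((∏ i : Fin N, (Real.exp (p i) * Real.exp (θ i / L) + 1) ^ L) +
            ∏ i : Fin N, (Real.exp (p i) + 1) ^ L) = _root_.sigmoid (S L) := by
      intro L
      have hA := exp_form L (fun i => Real.exp (p i) * Real.exp (θ i / L) + 1)
        (fun i => by positivity)
      have hB := exp_form L (fun i => Real.exp (p i) + 1) (fun i => by positivity)
      rw [hA, hB, ← sigmoid_sub]
      congr 1
      rw [hS, ← Finset.sum_sub_distrib]
      exact Finset.sum_congr rfl fun i _ => by ring
    have hlim : Tendsto S atTop (nhds (∑ i : Fin N, _root_.sigmoid (p i) * θ i)) := by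
      rw [hS]
      exact tendsto_finset_sum _ fun i _ => key_slope (p i) (θ i)
    have hcont : Continuous _root_.sigmoid := by
      unfold _root_.sigmoid
      exact continuous_exp.div (continuous_exp.add continuous_const)
        (fun x => by positivity)
    have := (hcont.tendsto _).comp hlim
    refine this.congr fun L => ?_
    simp only [Function.comp_apply]
    exact (hratio L).symm
end

section
/- Adding observed parents: with additionally M observed binary values g_1,…,g_M with edge weights w_j to H, P(H=1 | g) from the L-copy construction converges, as L → ∞, to σ(∑_{j=1}^M w_j g_j + ∑_{i=1}^N σ(p_i) θ_i). (Theorem 1, Matching Probabilities.) -/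
open Real Finset Filter

lemma sigmoid_cont : Continuous _root_.sigmoid :=
  Real.continuous_exp.div (Real.continuous_exp.add continuous_const)
    (fun x => by positivity)

lemma aux_slope (a t : ℝ) :
    Tendsto (fun L : ℕ => (L : ℝ) *
        (Real.log (Real.exp a * Real.exp (t / L) + 1) - Real.log (Real.exp a + 1)))
      atTop (nhds (_root_.sigmoid a * t)) := by
  set f : ℝ → ℝ := fun s => Real.log (Real.exp a * Real.exp (t * s) + 1) with hf
  have hderiv : HasDerivAt f (_root_.sigmoid a * t) 0 := by
    have h1 : HasDerivAt (fun s : ℝ => t * s) t 0 := by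
      simpa using (hasDerivAt_id (0:ℝ)).const_mul t
    have h2 : HasDerivAt (fun s : ℝ => Real.exp (t * s)) (Real.exp (t * 0) * t) 0 :=
      (Real.hasDerivAt_exp (t * 0)).comp 0 h1
    have h3 : HasDerivAt (fun s : ℝ => Real.exp a * Real.exp (t * s) + 1)
        (Real.exp a * (Real.exp (t * 0) * t)) 0 := by
      simpa using (h2.const_mul (Real.exp a)).add_const 1
    have h4 := h3.log (by positivity)
    have heq : _root_.sigmoid a * t = Real.exp a * t / (Real.exp a + 1) := by
      simp [_root_.sigmoid]; ring
    rw [hf, heq]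
    simpa using h4
  have hslope := hasDerivAt_iff_tendsto_slope.mp hderiv
  have hu : Tendsto (fun L : ℕ => (L : ℝ)⁻¹) atTop (nhdsWithin (0 : ℝ) {0}ᶜ) := by
    refine tendsto_nhdsWithin_iff.mpr ⟨tendsto_inv_atTop_nhds_zero_nat, ?_⟩
    filter_upwards [eventually_ge_atTop 1] with L hL
    have : (L:ℝ) ≠ 0 := by positivity
    simp [Set.mem_compl_iff, this]
  have hcomp := hslope.comp hu
  refine hcomp.congr' ?_
  filter_upwards [eventually_ge_atTop 1] with L hL
  have hL0 : (L : ℝ) ≠ 0 := by positivity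
  simp only [Function.comp, hf]
  rw [slope_def_field]
  have ht : t * (L:ℝ)⁻¹ = t / L := by rw [div_eq_mul_inv]
  rw [ht, mul_zero, Real.exp_zero, mul_one, sub_zero, div_eq_mul_inv, inv_inv, mul_comm]

theorem stmt_13 (N M : ℕ) (p θ : Fin N → ℝ) (w g : Fin M → ℝ)
    (hg : ∀ j, g j = 0 ∨ g j = 1) :
    Tendsto (fun L : ℕ =>
        (Real.exp (∑ j : Fin M, w j * g j) *
            ∏ i : Fin N, (Real.exp (p i) * Real.exp (θ i / L) + 1) ^ L) /
          (Real.exp (∑ j : Fin M, w j * g j) *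
              (∏ i : Fin N, (Real.exp (p i) * Real.exp (θ i / L) + 1) ^ L) +
            ∏ i : Fin N, (Real.exp (p i) + 1) ^ L))
      atTop
      (nhds (_root_.sigmoid (∑ j : Fin M, w j * g j + ∑ i : Fin N, _root_.sigmoid (p i) * θ i))) := by
  set W := ∑ j : Fin M, w j * g j with hW
  set S : ℕ → ℝ := fun L => W + ∑ i : Fin N,
    (L : ℝ) * (Real.log (Real.exp (p i) * Real.exp (θ i / L) + 1)
      - Real.log (Real.exp (p i) + 1)) with hS
  have hStend : Tendsto S atTop (nhds (W + ∑ i : Fin N, _root_.sigmoid (p i) * θ i)) := by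
    apply Tendsto.const_add
    exact tendsto_finset_sum _ (fun i _ => aux_slope (p i) (θ i))
  have hcont := (sigmoid_cont.continuousAt).tendsto.comp hStend
  refine hcont.congr' ?_
  filter_upwards [eventually_ge_atTop 1] with L hL
  have hL0 : (L : ℝ) ≠ 0 := by positivity
  -- rewrite products as exponentials
  have hA : (∏ i : Fin N, (Real.exp (p i) * Real.exp (θ i / L) + 1) ^ L)
      = Real.exp (∑ i : Fin N, (L : ℝ) * Real.log (Real.exp (p i) * Real.exp (θ i / L) + 1)) := by
    rw [Real.exp_sum]
    refine Finset.prod_congr rfl (fun i _ => ?_)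
    rw [Real.exp_nat_mul, Real.exp_log (by positivity)]
  have hD : (∏ i : Fin N, (Real.exp (p i) + 1) ^ L)
      = Real.exp (∑ i : Fin N, (L : ℝ) * Real.log (Real.exp (p i) + 1)) := by
    rw [Real.exp_sum]
    refine Finset.prod_congr rfl (fun i _ => ?_)
    rw [Real.exp_nat_mul, Real.exp_log (by positivity)]
  simp only [Function.comp, hA, hD, _root_.sigmoid, hS]
  set A := ∑ i : Fin N, (L : ℝ) * Real.log (Real.exp (p i) * Real.exp (θ i / L) + 1) with hA'
  set D := ∑ i : Fin N, (L : ℝ) * Real.log (Real.exp (p i) + 1) with hD'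
  have hsum : (∑ i : Fin N, (L : ℝ) * (Real.log (Real.exp (p i) * Real.exp (θ i / L) + 1)
      - Real.log (Real.exp (p i) + 1))) = A - D := by
    rw [hA', hD', ← Finset.sum_sub_distrib]
    exact Finset.sum_congr rfl (fun i _ => by ring)
  rw [hsum]
  rw [show W + (A - D) = (W + A) - D by ring, Real.exp_sub, Real.exp_add]
  have h1 : Real.exp D > 0 := Real.exp_pos _
  field_simp
end
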